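/- For complex q, z with |q| < 1 and |zq| < 1, Andrews' bivariate mock theta function ν(z;q) := Σ_{n≥0} q^{n²+n} / (−zq; q²)_{n+1} equals Σ_{n≥0} (q/z; q²)_n (−zq)ⁿ, for z ≠ 0. -/

import Mathlib

open scoped BigOperators

/-- Finite q-Pochhammer symbol `(a; q)_n`. -/
noncomputable def qPoch (a q : ℂ) (n : ℕ) : ℂ :=
  ∏ k ∈ Finset.range n, (1 - a * q ^ k)

/-- Infinite q-Pochhammer symbol `(a; q)_∞`. -/
noncomputable def qPochInf (a q : ℂ) : ℂ :=
  ∏' k : ℕ, (1 - a * q ^ k)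

/-- Gaussian binomial coefficient (value at `Q`), defined by the Pascal-type recurrence. -/
def gaussB {R : Type*} [CommRing R] (Q : R) : ℕ → ℕ → R
  | _, 0 => 1
  | 0, _+1 => 0
  | n+1, k+1 => gaussB Q n k + Q ^ (k+1) * gaussB Q n (k+1)

section gaussBlemmas
variable {R : Type*} [CommRing R] (Q : R)

@[simp] lemma gaussB_zero_right (n : ℕ) : gaussB Q n 0 = 1 := by
  cases n <;> rfl

@[simp] lemma gaussB_zero_succ (k : ℕ) : gaussB Q 0 (k+1) = 0 := rfl

lemma gaussB_succ_succ (n k : ℕ) :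
    gaussB Q (n+1) (k+1) = gaussB Q n k + Q ^ (k+1) * gaussB Q n (k+1) := rfl

lemma gaussB_eq_zero : ∀ n k, n < k → gaussB Q n k = 0 := by
  intro n
  induction n with
  | zero =>
    intro k hk
    cases k with
    | zero => omega
    | succ k => rfl
  | succ n ih =>
    intro k hk
    cases k with
    | zero => omega
    | succ k =>
      rw [gaussB_succ_succ, ih k (by omega), ih (k+1) (by omega)]
      ring

/-- The second Pascal recurrence. -/
lemma gaussB_pascal2 : ∀ n k, gaussB Q (n+1) (k+1) = Q ^ (n - k) * gaussB Q n k + gaussB Q n (k+1) := by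
  intro n
  induction n with
  | zero =>
    intro k
    cases k with
    | zero => simp [gaussB_succ_succ]
    | succ k => simp [gaussB_succ_succ, gaussB_eq_zero Q 0 (k+1) (by omega),
        gaussB_eq_zero Q 0 (k+2) (by omega), gaussB_eq_zero Q 1 (k+2) (by omega)]
  | succ n ih =>
    intro k
    cases k with
    | zero =>
      have e1 : gaussB Q (n+2) 1 = gaussB Q (n+1) 0 + Q ^ 1 * gaussB Q (n+1) 1 :=
        gaussB_succ_succ Q (n+1) 0
      have e2 : gaussB Q (n+1) 1 = Q ^ (n - 0) * gaussB Q n 0 + gaussB Q n 1 := ih 0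
      have e4 : gaussB Q (n+1) 1 = gaussB Q n 0 + Q ^ 1 * gaussB Q n 1 :=
        gaussB_succ_succ Q n 0
      simp only [gaussB_zero_right, Nat.sub_zero, mul_one] at e1 e2 e4 ⊢
      linear_combination e1 + Q * e2 - e4
    | succ k =>
      have e1 : gaussB Q (n+2) (k+2) = gaussB Q (n+1) (k+1) + Q ^ (k+2) * gaussB Q (n+1) (k+2) :=
        gaussB_succ_succ Q (n+1) (k+1)
      have e2 : gaussB Q (n+1) (k+1) = Q ^ (n - k) * gaussB Q n k + gaussB Q n (k+1) := ih k
      have e3 : gaussB Q (n+1) (k+2) = Q ^ (n - (k+1)) * gaussB Q n (k+1) + gaussB Q n (k+2) :=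
        ih (k+1)
      have e4 : gaussB Q (n+1) (k+1) = gaussB Q n k + Q ^ (k+1) * gaussB Q n (k+1) :=
        gaussB_succ_succ Q n k
      have e5 : gaussB Q (n+1) (k+2) = gaussB Q n (k+1) + Q ^ (k+2) * gaussB Q n (k+2) :=
        gaussB_succ_succ Q n (k+1)
      have hnk : n + 1 - (k + 1) = n - k := by omega
      rw [hnk]
      by_cases hkn : k + 1 ≤ n
      · have hpow : Q ^ (k+2) * Q ^ (n-(k+1)) = Q ^ (n-k) * Q ^ (k+1) := by
          rw [← pow_add, ← pow_add]
          congr 1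
          omega
        linear_combination e1 + e2 + Q^(k+2) * e3 - Q^(n-k) * e4 - e5 + gaussB Q n (k+1) * hpow
      · have hz1 : gaussB Q n (k+1) = 0 := gaussB_eq_zero Q n (k+1) (by omega)
        linear_combination e1 + e2 + Q^(k+2) * e3 - Q^(n-k) * e4 - e5
          + (Q^(k+2) * Q^(n-(k+1)) - Q^(n-k) * Q^(k+1)) * hz1

end gaussBlemmas

section bounds

lemma gaussB_real_nonneg {x : ℝ} (hx : 0 ≤ x) : ∀ n k, 0 ≤ gaussB x n k := by
  intro n
  induction n with
  | zero =>
    intro k; cases k with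
    | zero => norm_num [gaussB]
    | succ k => simp
  | succ n ih =>
    intro k; cases k with
    | zero => norm_num
    | succ k =>
      rw [gaussB_succ_succ]
      have := ih k
      have := ih (k+1)
      positivity

lemma gaussB_real_le {x : ℝ} (hx0 : 0 ≤ x) (hx1 : x < 1) :
    ∀ n k, gaussB x n k ≤ (1 / (1 - x)) ^ k := by
  have hx1' : 0 < 1 - x := by linarith
  intro n
  induction n with
  | zero =>
    intro k; cases k with
    | zero => simp [gaussB]
    | succ k =>
      rw [gaussB_zero_succ]
      positivity
  | succ n ih =>
    intro k; cases k with
    | zero => simp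
    | succ k =>
      rw [gaussB_succ_succ]
      have h1 := ih k
      have h2 := ih (k+1)
      have hxp : x ^ (k+1) ≤ x := by
        calc x ^ (k+1) ≤ x ^ 1 := pow_le_pow_of_le_one hx0 hx1.le (by omega)
        _ = x := pow_one x
      have hg2 : (0:ℝ) ≤ gaussB x n (k+1) := gaussB_real_nonneg hx0 n (k+1)
      have step : x ^ (k+1) * gaussB x n (k+1) ≤ x * (1/(1-x))^(k+1) := by
        apply mul_le_mul hxp h2 hg2 (by linarith)
      have key : (1/(1-x))^k + x * (1/(1-x))^(k+1) = (1/(1-x))^(k+1) := by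
        field_simp
        linear_combination (-((1-x)⁻¹)^k) * (inv_mul_cancel₀ hx1'.ne')
      linarith

lemma gaussB_norm_le (Q : ℂ) : ∀ n k, ‖gaussB Q n k‖ ≤ gaussB ‖Q‖ n k := by
  intro n
  induction n with
  | zero =>
    intro k; cases k with
    | zero => simp
    | succ k => simp
  | succ n ih =>
    intro k; cases k with
    | zero => simp
    | succ k =>
      rw [gaussB_succ_succ, gaussB_succ_succ]
      calc ‖gaussB Q n k + Q ^ (k+1) * gaussB Q n (k+1)‖
          ≤ ‖gaussB Q n k‖ + ‖Q ^ (k+1) * gaussB Q n (k+1)‖ := norm_add_le _ _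
        _ ≤ gaussB ‖Q‖ n k + ‖Q‖ ^ (k+1) * gaussB ‖Q‖ n (k+1) := by
            rw [norm_mul, norm_pow]
            have := ih k
            have := ih (k+1)
            have h1 : ‖Q‖ ^ (k+1) * ‖gaussB Q n (k+1)‖ ≤ ‖Q‖ ^ (k+1) * gaussB ‖Q‖ n (k+1) :=
              mul_le_mul_of_nonneg_left (ih (k+1)) (by positivity)
            linarith

/-- Uniform-in-`n` bound for Gaussian binomials. -/
lemma gaussB_norm_le' {Q : ℂ} (hQ : ‖Q‖ < 1) (n k : ℕ) :
    ‖gaussB Q n k‖ ≤ (1 / (1 - ‖Q‖)) ^ k :=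
  (gaussB_norm_le Q n k).trans (gaussB_real_le (norm_nonneg Q) hQ n k)

end bounds

section qpochlemmas

lemma qPoch_succ (a q : ℂ) (n : ℕ) :
    qPoch a q (n+1) = qPoch a q n * (1 - a * q ^ n) := by
  rw [qPoch, qPoch, Finset.prod_range_succ]

lemma qPoch_ne_zero {a q : ℂ} (ha : ‖a‖ < 1) (hq : ‖q‖ ≤ 1) (n : ℕ) :
    qPoch a q n ≠ 0 := by
  rw [qPoch]
  apply Finset.prod_ne_zero_iff.mpr
  intro k _
  intro h
  have h1 : a * q ^ k = 1 := by linear_combination -h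
  have : ‖a * q ^ k‖ < 1 := by
    rw [norm_mul, norm_pow]
    calc ‖a‖ * ‖q‖ ^ k ≤ ‖a‖ * 1 := by
          apply mul_le_mul_of_nonneg_left _ (norm_nonneg a)
          exact pow_le_one₀ (norm_nonneg q) hq
      _ = ‖a‖ := mul_one _
      _ < 1 := ha
  rw [h1] at this
  simp at this

end qpochlemmas

section genfun

/-- Generating function of a column of Gaussian binomials: summability. -/
lemma gaussB_col_summable {Q t : ℂ} (hQ : ‖Q‖ < 1) (ht : ‖t‖ < 1) (j : ℕ) :
    Summable (fun m : ℕ => gaussB Q (j + m) j * t ^ m) := by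
  apply Summable.of_norm_bounded (g := fun m => (1 / (1 - ‖Q‖)) ^ j * ‖t‖ ^ m)
  · exact (summable_geometric_of_lt_one (norm_nonneg t) ht).mul_left _
  · intro m
    rw [norm_mul, norm_pow]
    exact mul_le_mul_of_nonneg_right (gaussB_norm_le' hQ (j+m) j) (by positivity)

/-- Generating function of a column of Gaussian binomials. -/
lemma gaussB_col_tsum {Q t : ℂ} (hQ : ‖Q‖ < 1) (ht : ‖t‖ < 1) :
    ∀ j : ℕ, ∑' m : ℕ, gaussB Q (j + m) j * t ^ m = (qPoch t Q (j+1))⁻¹ := by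
  have hfac : ∀ k : ℕ, (1 - t * Q ^ k) ≠ 0 := by
    intro k h
    have h1 : t * Q ^ k = 1 := by linear_combination -h
    have : ‖t * Q ^ k‖ < 1 := by
      rw [norm_mul, norm_pow]
      calc ‖t‖ * ‖Q‖ ^ k ≤ ‖t‖ * 1 := by
            apply mul_le_mul_of_nonneg_left _ (norm_nonneg t)
            exact pow_le_one₀ (norm_nonneg Q) hQ.le
        _ = ‖t‖ := mul_one _
        _ < 1 := ht
    rw [h1] at this; simp at this
  intro j
  induction j with
  | zero =>
    have : ∀ m : ℕ, gaussB Q (0 + m) 0 * t ^ m = t ^ m := by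
      intro m; rw [gaussB_zero_right, one_mul]
    rw [tsum_congr this, tsum_geometric_of_norm_lt_one ht]
    congr 1
    rw [qPoch]
    simp
  | succ j ih =>
    have hsum1 := gaussB_col_summable hQ ht j
    have hsum2 : Summable (fun m : ℕ => gaussB Q (j + m) (j+1) * t ^ m) := by
      apply Summable.of_norm_bounded (g := fun m => (1 / (1 - ‖Q‖)) ^ (j+1) * ‖t‖ ^ m)
      · exact (summable_geometric_of_lt_one (norm_nonneg t) ht).mul_left _
      · intro m
        rw [norm_mul, norm_pow]
        exact mul_le_mul_of_nonneg_right (gaussB_norm_le' hQ (j+m) (j+1)) (by positivity)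
    have hsum3 := gaussB_col_summable hQ ht (j+1)
    have split : ∀ m : ℕ, gaussB Q ((j+1) + m) (j+1) * t ^ m
        = gaussB Q (j + m) j * t ^ m + Q ^ (j+1) * (gaussB Q (j + m) (j+1) * t ^ m) := by
      intro m
      have h1 : (j+1) + m = (j + m) + 1 := by omega
      rw [h1, gaussB_succ_succ]
      ring
    have key : ∑' m : ℕ, gaussB Q ((j+1) + m) (j+1) * t ^ m
        = (∑' m : ℕ, gaussB Q (j + m) j * t ^ m)
          + Q ^ (j+1) * ∑' m : ℕ, gaussB Q (j + m) (j+1) * t ^ m := by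
      rw [tsum_congr split, Summable.tsum_add hsum1 (hsum2.mul_left _), tsum_mul_left]
    -- second sum: first term zero, shift
    have shift : ∑' m : ℕ, gaussB Q (j + m) (j+1) * t ^ m
        = t * ∑' m : ℕ, gaussB Q ((j+1) + m) (j+1) * t ^ m := by
      rw [Summable.tsum_eq_zero_add hsum2]
      simp only [Nat.add_zero, pow_zero, mul_one]
      rw [gaussB_eq_zero Q j (j+1) (by omega), zero_add]
      rw [← tsum_mul_left]
      apply tsum_congr
      intro m
      have h1 : j + (m + 1) = (j + 1) + m := by omega
      rw [h1]
      ring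
    set S := ∑' m : ℕ, gaussB Q ((j+1) + m) (j+1) * t ^ m with hS
    rw [shift] at key
    rw [ih] at key
    -- key : S = (qPoch t Q (j+1))⁻¹ + Q^(j+1) * (t * S)
    have hP : qPoch t Q (j+1) ≠ 0 := qPoch_ne_zero ht hQ.le (j+1)
    have hP2 : qPoch t Q (j+2) ≠ 0 := qPoch_ne_zero ht hQ.le (j+2)
    have hfac' : (1 - t * Q ^ (j+1)) ≠ 0 := hfac (j+1)
    have hstep : qPoch t Q (j+2) = qPoch t Q (j+1) * (1 - t * Q ^ (j+1)) := qPoch_succ t Q (j+1)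
    have key2 : S * (1 - t * Q ^ (j+1)) = (qPoch t Q (j+1))⁻¹ := by
      linear_combination key
    rw [hstep, mul_inv, ← key2, mul_assoc, mul_inv_cancel₀ hfac', mul_one]
end genfun

section qbinom

/-- Finite q-binomial theorem. -/
lemma qPoch_eq_sum (a : ℂ) : ∀ (Q : ℂ) (n : ℕ),
    qPoch a Q n = ∑ j ∈ Finset.range (n+1), gaussB Q n j * (-a) ^ j * Q ^ (j.choose 2) := by
  intro Q n
  induction n with
  | zero => simp [qPoch]
  | succ n ih =>
    set f : ℕ → ℂ := fun j => gaussB Q n j * (-a) ^ j * Q ^ (j.choose 2) with hf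
    have expand : ∀ i ∈ Finset.range (n+1),
        gaussB Q (n+1) (i+1) * (-a) ^ (i+1) * Q ^ ((i+1).choose 2)
        = f i * (-a * Q ^ n) + f (i+1) := by
      intro i hi
      rw [Finset.mem_range] at hi
      have hp2 := gaussB_pascal2 Q n i
      have hch : (i+1).choose 2 = i.choose 2 + i := by
        rw [Nat.choose_succ_succ]
        simp [Nat.choose_one_right, Nat.add_comm]
      have hpow : Q ^ (n - i) * Q ^ ((i+1).choose 2) = Q ^ (i.choose 2) * Q ^ n := by
        rw [hch, ← pow_add, ← pow_add]
        congr 1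
        omega
      simp only [hf]
      rw [hp2]
      calc (Q ^ (n-i) * gaussB Q n i + gaussB Q n (i+1)) * (-a)^(i+1) * Q^((i+1).choose 2)
          = gaussB Q n i * (-a)^i * (-a) * (Q ^ (n-i) * Q^((i+1).choose 2))
            + gaussB Q n (i+1) * (-a)^(i+1) * Q^((i+1).choose 2) := by
            rw [pow_succ]
            ring
        _ = gaussB Q n i * (-a)^i * (-a) * (Q ^ (i.choose 2) * Q ^ n)
            + gaussB Q n (i+1) * (-a)^(i+1) * Q^((i+1).choose 2) := by rw [hpow]
        _ = (gaussB Q n i * (-a)^i * Q^(i.choose 2)) * (-a * Q^n)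
            + gaussB Q n (i+1) * (-a)^(i+1) * Q^((i+1).choose 2) := by ring
    have hzero : gaussB Q (n+1) 0 * (-a) ^ 0 * Q ^ (Nat.choose 0 2) = f 0 := by
      simp [hf]
    calc qPoch a Q (n+1) = qPoch a Q n * (1 - a * Q ^ n) := qPoch_succ a Q n
      _ = (∑ j ∈ Finset.range (n+1), f j) * (1 - a * Q ^ n) := by rw [ih]
      _ = (∑ j ∈ Finset.range (n+1), f j) * (-a * Q ^ n)
            + ((∑ j ∈ Finset.range (n+1), f j) + f (n+1)) := by
            have hlast : f (n+1) = 0 := by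
              simp only [hf]
              rw [gaussB_eq_zero Q n (n+1) (by omega)]
              ring
            rw [hlast]
            ring
      _ = (∑ i ∈ Finset.range (n+1), f i * (-a * Q ^ n))
            + (∑ i ∈ Finset.range (n+1), f (i+1) + f 0) := by
            rw [← Finset.sum_mul, ← Finset.sum_range_succ f (n+1),
              Finset.sum_range_succ' f (n+1)]
      _ = ∑ i ∈ Finset.range (n+1), (f i * (-a * Q ^ n) + f (i+1)) + f 0 := by
            rw [Finset.sum_add_distrib]
            ring
      _ = ∑ i ∈ Finset.range (n+1),
            gaussB Q (n+1) (i+1) * (-a) ^ (i+1) * Q ^ ((i+1).choose 2)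
            + gaussB Q (n+1) 0 * (-a) ^ 0 * Q ^ (Nat.choose 0 2) := by
            rw [Finset.sum_congr rfl expand, hzero]
      _ = ∑ j ∈ Finset.range (n+2),
            gaussB Q (n+1) j * (-a) ^ j * Q ^ (j.choose 2) := by
            rw [Finset.sum_range_succ'
              (fun j => gaussB Q (n+1) j * (-a) ^ j * Q ^ (j.choose 2)) (n+1)]

end qbinom

/-- Diagonal summation for a summable family on `ℕ × ℕ`. -/
lemma tsum_prod_eq_tsum_sum_range {F : ℕ × ℕ → ℂ} (h : Summable F) :
    ∑' p : ℕ × ℕ, F p = ∑' n : ℕ, ∑ k ∈ Finset.range (n+1), F (k, n - k) := by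
  have : ∀ n : ℕ, ∑ k ∈ Finset.range (n+1), F (k, n-k)
      = ∑ kl ∈ Finset.HasAntidiagonal.antidiagonal n, F kl := by
    intro n
    rw [Finset.Nat.sum_antidiagonal_eq_sum_range_succ_mk]
  rw [tsum_congr this]
  conv_rhs => congr; ext n; rw [← Finset.sum_finset_coe, ← tsum_fintype (L := SummationFilter.unconditional _)]
  rw [← Finset.HasAntidiagonal.sigmaAntidiagonalEquivProd.tsum_eq F]
  exact Summable.tsum_sigma' (fun n => (hasSum_fintype _).summable)
    (Finset.HasAntidiagonal.sigmaAntidiagonalEquivProd.summable_iff.mpr h)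

theorem andrews_nu (q z : ℂ) (hq : ‖q‖ < 1) (hz : z ≠ 0) (hzq : ‖z * q‖ < 1) :
    ∑' n : ℕ, q ^ (n ^ 2 + n) / qPoch (-(z * q)) (q ^ 2) (n + 1)
      = ∑' n : ℕ, qPoch (q / z) (q ^ 2) n * (-(z * q)) ^ n := by
  have hQ : ‖q ^ 2‖ < 1 := by
    rw [norm_pow]
    calc ‖q‖ ^ 2 ≤ ‖q‖ := pow_le_of_le_one (norm_nonneg q) hq.le (by omega)
      _ < 1 := hq
  have ht : ‖-(z * q)‖ < 1 := by rwa [norm_neg]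
  set t : ℂ := -(z * q) with hT
  set F : ℕ × ℕ → ℂ := fun p => gaussB (q^2) (p.1 + p.2) p.1 * q ^ (p.1^2 + p.1) * t ^ p.2
    with hF
  set M : ℝ := 1 / (1 - ‖q^2‖) with hM
  have hM0 : 0 < M := by rw [hM]; exact div_pos one_pos (by linarith)
  -- summability of the bound on the j-coordinate
  have hgsum : Summable (fun j : ℕ => M ^ j * ‖q‖ ^ (j^2 + j)) := by
    apply summable_of_ratio_norm_eventually_le (r := 1/2) (by norm_num)
    have htend : Filter.Tendsto (fun j : ℕ => ‖q‖ ^ j) Filter.atTop (nhds 0) :=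
      tendsto_pow_atTop_nhds_zero_of_lt_one (norm_nonneg q) hq
    have hev : ∀ᶠ j : ℕ in Filter.atTop, ‖q‖ ^ j ≤ 1 / (2 * M) := by
      apply htend.eventually_le_const
      exact div_pos one_pos (by linarith)
    filter_upwards [hev] with j hj
    have hnn : (0:ℝ) ≤ M ^ j * ‖q‖ ^ (j^2+j) := by positivity
    rw [Real.norm_of_nonneg (by positivity), Real.norm_of_nonneg hnn]
    have hex : (j+1)^2 + (j+1) = (j^2 + j) + (2*j+2) := by ring
    rw [hex, pow_add ‖q‖, pow_succ M]
    have h1 : ‖q‖ ^ (2*j+2) ≤ ‖q‖ ^ j := pow_le_pow_of_le_one (norm_nonneg q) hq.le (by omega)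
    have h2 : M ^ j * M * (‖q‖^(j^2+j) * ‖q‖^(2*j+2))
        = (M * ‖q‖^(2*j+2)) * (M^j * ‖q‖^(j^2+j)) := by ring
    rw [h2]
    apply mul_le_mul_of_nonneg_right _ hnn
    calc M * ‖q‖^(2*j+2) ≤ M * ‖q‖ ^ j := mul_le_mul_of_nonneg_left h1 hM0.le
      _ ≤ M * (1/(2*M)) := mul_le_mul_of_nonneg_left hj hM0.le
      _ = 1/2 := by field_simp
  have hFsum : Summable F := by
    apply Summable.of_norm_bounded
      (g := fun p : ℕ × ℕ => (M ^ p.1 * ‖q‖ ^ (p.1^2 + p.1)) * ‖t‖ ^ p.2)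
    · exact hgsum.mul_of_nonneg (summable_geometric_of_lt_one (norm_nonneg t) ht)
        (fun j => by positivity) (fun m => by positivity)
    · rintro ⟨j, m⟩
      simp only [hF, norm_mul, norm_pow]
      apply mul_le_mul_of_nonneg_right _ (by positivity)
      apply mul_le_mul_of_nonneg_right _ (by positivity)
      exact gaussB_norm_le' hQ (j+m) j
  -- LHS
  have lhs_eq : ∑' n : ℕ, q ^ (n ^ 2 + n) / qPoch (-(z * q)) (q ^ 2) (n + 1)
      = ∑' p : ℕ × ℕ, F p := by
    rw [Summable.tsum_prod hFsum]
    apply tsum_congr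
    intro j
    have : ∀ m : ℕ, F (j, m) = q ^ (j^2+j) * (gaussB (q^2) (j+m) j * t ^ m) := by
      intro m; simp only [hF]; ring
    rw [tsum_congr this, tsum_mul_left, gaussB_col_tsum hQ ht j, div_eq_mul_inv]
  -- RHS
  have rhs_eq : ∑' p : ℕ × ℕ, F p
      = ∑' n : ℕ, qPoch (q / z) (q ^ 2) n * (-(z * q)) ^ n := by
    rw [tsum_prod_eq_tsum_sum_range hFsum]
    apply tsum_congr
    intro n
    rw [qPoch_eq_sum (q/z) (q^2) n, Finset.sum_mul]
    apply Finset.sum_congr rfl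
    intro j hj
    rw [Finset.mem_range] at hj
    have hjn : j ≤ n := by omega
    simp only [hF]
    have hadd : j + (n - j) = n := by omega
    rw [hadd]
    have htj : t ^ n = t ^ j * t ^ (n - j) := by rw [← pow_add, hadd]
    rw [htj]
    symm
    have hkey : (-(q/z))^j * (q^2)^(j.choose 2) * t ^ j = q ^ (j^2+j) := by
      have h1 : (-(q/z))^j * t ^ j = (q^2)^j := by
        rw [← mul_pow]
        congr 1
        field_simp
        ring
      calc (-(q/z))^j * (q^2)^(j.choose 2) * t ^ j
          = ((-(q/z))^j * t^j) * (q^2)^(j.choose 2) := by ring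
        _ = (q^2)^j * (q^2)^(j.choose 2) := by rw [h1]
        _ = (q^2)^(j + j.choose 2) := by rw [← pow_add]
        _ = q ^ (2 * (j + j.choose 2)) := by rw [← pow_mul]
        _ = q ^ (j^2 + j) := by
            congr 1
            have : 2 * j.choose 2 = j * (j - 1) := by
              rw [Nat.choose_two_right]
              exact Nat.mul_div_cancel' (Nat.even_mul_pred_self j).two_dvd
            cases j with
            | zero => simp
            | succ i =>
              have h2 : 2 * (i+1).choose 2 = (i+1) * i := by
                rw [this]; simp
              have h3 : (i+1)^2 = (i+1)*(i+1) := sq (i+1)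
              nlinarith [h2]
    calc gaussB (q^2) n j * (-(q/z))^j * (q^2)^(j.choose 2) * (t^j * t^(n-j))
        = gaussB (q^2) n j * ((-(q/z))^j * (q^2)^(j.choose 2) * t^j) * t^(n-j) := by ring
      _ = gaussB (q^2) n j * q^(j^2+j) * t^(n-j) := by rw [hkey]
  rw [lhs_eq, rhs_eq]
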